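/- Fix N, fields h : Fin N → ℝ, couplings J : Fin N → Fin N → ℝ, and a distinguished spin configuration z₀ ∈ {-1,1}^N. Then the sum of the Ising energies E(z) over all spin configurations z ∈ {-1,1}^N with z ≠ z₀ equals -E(z₀). -/
import Mathlib


/-- The Ising energy of a spin configuration `z` for local fields `h` and couplings `J`:
`E(z) = ∑ i, h i * z i + ∑ i, ∑ j > i, J i j * z i * z j`. -/
noncomputable def isingEnergy {N : ℕ} (h : Fin N → ℝ) (J : Fin N → Fin N → ℝ)
    (z : Fin N → ℝ) : ℝ :=
  ∑ i, h i * z i + ∑ i, ∑ j ∈ Finset.univ.filter (fun j => i < j), J i j * z i * z j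

/-- The finite set of all spin configurations `z : Fin N → ℝ` with `z i ∈ {-1, 1}`. -/
noncomputable def spinConfigs (N : ℕ) : Finset (Fin N → ℝ) :=
  Fintype.piFinset fun _ => ({-1, 1} : Finset ℝ)

lemma sum_flip_zero {N : ℕ} (i : Fin N) (f : (Fin N → ℝ) → ℝ)
    (hodd : ∀ z, f (Function.update z i (-z i)) = - f z) :
    ∑ z ∈ spinConfigs N, f z = 0 := by
  apply Finset.sum_involution (fun z _ => Function.update z i (-z i))
  · intro z _; rw [hodd]; ring
  · intro z hz _ heq
    have h1 := congrFun heq i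
    simp [Function.update_self] at h1
    have h2 : z i ∈ ({-1, 1} : Finset ℝ) := (Fintype.mem_piFinset.mp hz) i
    simp at h2
    rcases h2 with h2 | h2 <;> rw [h2] at h1 <;> norm_num at h1
  · intro z _
    funext j
    rcases eq_or_ne j i with rfl | hj
    · simp [Function.update_self]
    · simp [Function.update_of_ne hj]
  · intro z hz
    simp only [spinConfigs, Fintype.mem_piFinset] at hz ⊢
    intro j
    rcases eq_or_ne j i with rfl | hj
    · have := hz j; simp at this ⊢; rcases this with h1 | h1 <;> simp [h1]
    · simpa [Function.update_of_ne hj] using hz j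

lemma sum_coord {N : ℕ} (i : Fin N) : ∑ z ∈ spinConfigs N, z i = 0 := by
  apply sum_flip_zero i
  intro z; simp [Function.update_self]

lemma sum_coord_mul {N : ℕ} (i j : Fin N) (hij : i ≠ j) :
    ∑ z ∈ spinConfigs N, z i * z j = 0 := by
  apply sum_flip_zero i
  intro z; simp [Function.update_self, Function.update_of_ne (Ne.symm hij)]

lemma sum_all : ∀ (N : ℕ) (h : Fin N → ℝ) (J : Fin N → Fin N → ℝ),
    ∑ z ∈ spinConfigs N, isingEnergy h J z = 0 := by
  intro N h J
  simp only [isingEnergy, Finset.sum_add_distrib]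
  rw [Finset.sum_comm]
  have h1 : ∀ i : Fin N, ∑ z ∈ spinConfigs N, h i * z i = 0 := by
    intro i; rw [← Finset.mul_sum, sum_coord, mul_zero]
  rw [Finset.sum_congr rfl (fun i _ => h1 i), Finset.sum_const_zero, zero_add]
  rw [Finset.sum_comm]
  apply Finset.sum_eq_zero
  intro i _
  rw [Finset.sum_comm]
  apply Finset.sum_eq_zero
  intro j hj
  simp only [Finset.mem_filter] at hj
  have : ∀ z ∈ spinConfigs N, J i j * z i * z j = J i j * (z i * z j) := by
    intro z _; ring
  rw [Finset.sum_congr rfl this, ← Finset.mul_sum, sum_coord_mul i j hj.2.ne, mul_zero]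

/-- The sum of the Ising energies over all spin configurations different from a distinguished
configuration `z₀ ∈ {-1,1}^N` equals the negation of the energy of `z₀`. -/
theorem sum_isingEnergy_ne_eq_neg (N : ℕ) (h : Fin N → ℝ) (J : Fin N → Fin N → ℝ)
    (z₀ : Fin N → ℝ) (hz₀ : z₀ ∈ spinConfigs N) :
    ∑ z ∈ (spinConfigs N).filter (fun z => z ≠ z₀), isingEnergy h J z =
      -isingEnergy h J z₀ := by
  classical
  have key := sum_all N h J
  rw [← Finset.sum_filter_add_sum_filter_not (spinConfigs N) (fun z => z ≠ z₀)] at key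
  have : (spinConfigs N).filter (fun z => ¬ z ≠ z₀) = {z₀} := by
    ext z; simp only [Finset.mem_filter, Finset.mem_singleton, not_not]
    exact ⟨fun h => h.2, fun h => ⟨h ▸ hz₀, h⟩⟩
  rw [this, Finset.sum_singleton] at key
  linarith
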